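/- Let α ∈ ℕ and n ≥ 1. Define T_n^α(x) = −((α+2)_{n-1}/n!)·x·L_{n-1}^{α+2}(x) and the operator L_{2α+4}^α y(x) = (−1)^{α+1} e^x x · D_x^{α+2}( e^{−x} D_x^{α+2}( x^{α+1} y(x) ) ). Then L_{2α+4}^α T_n^α(x) = −(n)_{α+2} T_n^α(x), i.e. T_n^α is an eigenfunction of L_{2α+4}^α with eigenvalue −(n)_{α+2}. -/

import Mathlib

open Real Finset

noncomputable def laguerre (n : ℕ) (γ : ℝ) : ℝ → ℝ := fun x =>
  ∑ k ∈ Finset.range (n + 1),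
    (-1 : ℝ) ^ k * (ascPochhammer ℝ (n - k)).eval (γ + (k : ℝ) + 1)
      / ((n - k).factorial * k.factorial) * x ^ k

noncomputable def lagTypeOp (α : ℕ) (y : ℝ → ℝ) : ℝ → ℝ := fun x =>
  (-1 : ℝ) ^ (α + 1) * Real.exp x * x *
    iteratedDeriv (α + 2)
      (fun t => Real.exp (-t) * iteratedDeriv (α + 2) (fun s => s ^ (α + 1) * y s) t) x

noncomputable def Tpoly (n : ℕ) (α : ℕ) : ℝ → ℝ := fun x =>
  -((ascPochhammer ℝ (n - 1)).eval ((α : ℝ) + 2) / n.factorial) * x * laguerre (n - 1) ((α : ℝ) + 2) x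

noncomputable def lagP (m : ℕ) (γ : ℝ) : Polynomial ℝ :=
  ∑ k ∈ Finset.range (m + 1),
    Polynomial.C ((-1 : ℝ) ^ k * (ascPochhammer ℝ (m - k)).eval (γ + (k : ℝ) + 1)
      / ((m - k).factorial * k.factorial)) * Polynomial.X ^ k

lemma laguerre_eq_lagP (m : ℕ) (γ : ℝ) (x : ℝ) :
    laguerre m γ x = (lagP m γ).eval x := by
  simp [laguerre, lagP, Polynomial.eval_finset_sum]

lemma iteratedDeriv_polyeval (j : ℕ) (p : Polynomial ℝ) :
    iteratedDeriv j (fun x => p.eval x) = fun x => (Polynomial.derivative^[j] p).eval x := by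
  induction j generalizing p with
  | zero => simp
  | succ j ih =>
    rw [iteratedDeriv_succ', Function.iterate_succ_apply, ← ih]
    have hd : (deriv fun x => p.eval x) = fun x => (Polynomial.derivative p).eval x :=
      funext fun x => Polynomial.deriv p
    rw [hd]

lemma ascPochhammer_succ_left_eval (s : ℕ) (b : ℝ) :
    (ascPochhammer ℝ (s + 1)).eval b = b * (ascPochhammer ℝ s).eval (b + 1) := by
  rw [ascPochhammer_succ_left]
  simp [Polynomial.eval_comp]

lemma poch_step (s : ℕ) (b : ℝ) :
    (ascPochhammer ℝ (s + 1)).eval (b + 1)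
      = (ascPochhammer ℝ (s + 1)).eval b + ((s : ℝ) + 1) * (ascPochhammer ℝ s).eval (b + 1) := by
  rw [ascPochhammer_succ_eval, ascPochhammer_succ_left_eval]
  ring

/-- Polynomial identity (II): `L_m^{γ+1} = L_m^γ - (L_m^γ)'`. -/
lemma lagP_sub_derivative (m : ℕ) (γ : ℝ) :
    lagP m γ - Polynomial.derivative (lagP m γ) = lagP m (γ + 1) := by
  classical
  unfold lagP
  rw [Polynomial.derivative_sum]
  simp only [Polynomial.derivative_C_mul, Polynomial.derivative_X_pow]
  have hshift : ∑ k ∈ Finset.range (m + 1),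
      Polynomial.C ((-1 : ℝ) ^ k * (ascPochhammer ℝ (m - k)).eval (γ + (k : ℝ) + 1)
        / ((m - k).factorial * k.factorial)) * (Polynomial.C (k : ℝ) * Polynomial.X ^ (k - 1))
      = ∑ j ∈ Finset.range m,
        Polynomial.C ((-1 : ℝ) ^ (j+1) * (ascPochhammer ℝ (m - (j+1))).eval (γ + ((j:ℝ)+1) + 1)
          / ((m - (j+1)).factorial * (j+1).factorial) * ((j : ℝ) + 1)) * Polynomial.X ^ j := by
    rw [Finset.sum_range_succ']
    simp only [Nat.cast_zero, Polynomial.C_0, zero_mul, mul_zero, Polynomial.C_mul, add_zero]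
    apply Finset.sum_congr rfl
    intro j _
    push_cast
    ring
  rw [hshift]
  have key : ∀ k ∈ Finset.range m,
      Polynomial.C ((-1 : ℝ) ^ k * (ascPochhammer ℝ (m - k)).eval (γ + (k : ℝ) + 1)
        / ((m - k).factorial * k.factorial)) * Polynomial.X ^ k
      - Polynomial.C ((-1 : ℝ) ^ (k+1) * (ascPochhammer ℝ (m - (k+1))).eval (γ + ((k:ℝ)+1) + 1)
          / ((m - (k+1)).factorial * (k+1).factorial) * ((k : ℝ) + 1)) * Polynomial.X ^ k
      = Polynomial.C ((-1 : ℝ) ^ k * (ascPochhammer ℝ (m - k)).eval ((γ + 1) + (k : ℝ) + 1)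
        / ((m - k).factorial * k.factorial)) * Polynomial.X ^ k := by
    intro k hk
    rw [Finset.mem_range] at hk
    rw [← sub_mul, ← Polynomial.C_sub]
    congr 2
    obtain ⟨s, hs⟩ : ∃ s, m - k = s + 1 := ⟨m - k - 1, by omega⟩
    have h1 : m - (k + 1) = s := by omega
    rw [hs, h1]
    have hstep := poch_step s (γ + (k : ℝ) + 1)
    have hfac : ((s + 1).factorial : ℝ) = ((s : ℝ) + 1) * s.factorial := by
      rw [Nat.factorial_succ]; push_cast; ring
    have hkfac : ((k + 1).factorial : ℝ) = ((k : ℝ) + 1) * k.factorial := by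
      rw [Nat.factorial_succ]; push_cast; ring
    have hsf : (s.factorial : ℝ) ≠ 0 := Nat.cast_ne_zero.mpr s.factorial_ne_zero
    have hkf : (k.factorial : ℝ) ≠ 0 := Nat.cast_ne_zero.mpr k.factorial_ne_zero
    have h2 : γ + ((k : ℝ) + 1) + 1 = (γ + (k : ℝ) + 1) + 1 := by ring
    have h3 : γ + 1 + (k : ℝ) + 1 = (γ + (k : ℝ) + 1) + 1 := by ring
    rw [h2, h3, hfac, hkfac, hstep]
    have hs1 : ((s : ℝ) + 1) ≠ 0 := by positivity
    have hk1 : ((k : ℝ) + 1) ≠ 0 := by positivity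
    field_simp
    ring
  have htop : Polynomial.C ((-1 : ℝ) ^ m * (ascPochhammer ℝ (m - m)).eval (γ + (m : ℝ) + 1)
      / ((m - m).factorial * m.factorial)) * Polynomial.X ^ m
      = Polynomial.C ((-1 : ℝ) ^ m * (ascPochhammer ℝ (m - m)).eval ((γ + 1) + (m : ℝ) + 1)
      / ((m - m).factorial * m.factorial)) * Polynomial.X ^ m := by
    simp [Nat.sub_self]
  calc (∑ k ∈ Finset.range (m + 1),
        Polynomial.C ((-1 : ℝ) ^ k * (ascPochhammer ℝ (m - k)).eval (γ + (k : ℝ) + 1)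
          / ((m - k).factorial * k.factorial)) * Polynomial.X ^ k)
      - ∑ j ∈ Finset.range m,
        Polynomial.C ((-1 : ℝ) ^ (j+1) * (ascPochhammer ℝ (m - (j+1))).eval (γ + ((j:ℝ)+1) + 1)
          / ((m - (j+1)).factorial * (j+1).factorial) * ((j : ℝ) + 1)) * Polynomial.X ^ j
      = (∑ k ∈ Finset.range m,
          (Polynomial.C ((-1 : ℝ) ^ k * (ascPochhammer ℝ (m - k)).eval (γ + (k : ℝ) + 1)
            / ((m - k).factorial * k.factorial)) * Polynomial.X ^ k
          - Polynomial.C ((-1 : ℝ) ^ (k+1) * (ascPochhammer ℝ (m - (k+1))).eval (γ + ((k:ℝ)+1) + 1)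
              / ((m - (k+1)).factorial * (k+1).factorial) * ((k : ℝ) + 1)) * Polynomial.X ^ k))
        + Polynomial.C ((-1 : ℝ) ^ m * (ascPochhammer ℝ (m - m)).eval (γ + (m : ℝ) + 1)
          / ((m - m).factorial * m.factorial)) * Polynomial.X ^ m := by
        rw [Finset.sum_range_succ, Finset.sum_sub_distrib]; ring
    _ = (∑ k ∈ Finset.range m,
          Polynomial.C ((-1 : ℝ) ^ k * (ascPochhammer ℝ (m - k)).eval ((γ + 1) + (k : ℝ) + 1)
            / ((m - k).factorial * k.factorial)) * Polynomial.X ^ k)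
        + Polynomial.C ((-1 : ℝ) ^ m * (ascPochhammer ℝ (m - m)).eval ((γ + 1) + (m : ℝ) + 1)
          / ((m - m).factorial * m.factorial)) * Polynomial.X ^ m := by
        rw [Finset.sum_congr rfl key, htop]
    _ = _ := (Finset.sum_range_succ _ _).symm

lemma nat_coeff_identity (a m k : ℕ) (hk : k ≤ m) :
    (a + k + 1).ascFactorial (m - k) * (k + a).descFactorial a
      = (m + 1).ascFactorial a * (k + 1).ascFactorial (m - k) := by
  have e1 : k.factorial * (k + a).descFactorial a = (k + a).factorial := by
    have := Nat.factorial_mul_descFactorial (n := k + a) (k := a) (Nat.le_add_left a k)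
    simpa [Nat.add_sub_cancel] using this
  have e2 : (k + a).factorial * (k + a + 1).ascFactorial (m - k) = (k + a + (m - k)).factorial :=
    Nat.factorial_mul_ascFactorial (k + a) (m - k)
  have e3 : k.factorial * (k + 1).ascFactorial (m - k) = (k + (m - k)).factorial :=
    Nat.factorial_mul_ascFactorial k (m - k)
  have e4 : m.factorial * (m + 1).ascFactorial a = (m + a).factorial :=
    Nat.factorial_mul_ascFactorial m a
  have h5 : k + a + (m - k) = m + a := by omega
  have h6 : k + (m - k) = m := by omega
  have h7 : a + k + 1 = k + a + 1 := by omega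
  apply Nat.eq_of_mul_eq_mul_left k.factorial_pos
  calc k.factorial * ((a + k + 1).ascFactorial (m - k) * (k + a).descFactorial a)
      = (k.factorial * (k + a).descFactorial a) * (k + a + 1).ascFactorial (m - k) := by
        rw [h7]; ring
    _ = (k + a).factorial * (k + a + 1).ascFactorial (m - k) := by rw [e1]
    _ = (m + a).factorial := by rw [e2, h5]
    _ = k.factorial * ((m + 1).ascFactorial a * (k + 1).ascFactorial (m - k)) := by
        rw [show k.factorial * ((m + 1).ascFactorial a * (k + 1).ascFactorial (m - k))
            = (k.factorial * (k + 1).ascFactorial (m - k)) * (m + 1).ascFactorial a by ring,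
          e3, h6, e4]

/-- Lemma (I): iterated derivative of `X^a * L_m^a`. -/
lemma iterate_derivative_Xpow_mul_lagP (a m : ℕ) :
    Polynomial.derivative^[a] (Polynomial.X ^ a * lagP m ((a : ℕ) : ℝ))
      = Polynomial.C (((m + 1).ascFactorial a : ℝ)) * lagP m 0 := by
  classical
  unfold lagP
  rw [Finset.mul_sum, Finset.mul_sum, Polynomial.iterate_derivative_sum]
  apply Finset.sum_congr rfl
  intro k hk
  rw [Finset.mem_range] at hk
  have hk' : k ≤ m := by omega
  have h1 : Polynomial.X ^ a * (Polynomial.C ((-1 : ℝ) ^ k * (ascPochhammer ℝ (m - k)).eval (((a:ℕ):ℝ) + (k : ℝ) + 1)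
      / ((m - k).factorial * k.factorial)) * Polynomial.X ^ k)
      = Polynomial.C ((-1 : ℝ) ^ k * (ascPochhammer ℝ (m - k)).eval (((a:ℕ):ℝ) + (k : ℝ) + 1)
      / ((m - k).factorial * k.factorial)) * Polynomial.X ^ (k + a) := by
    rw [pow_add]; ring
  rw [h1, Polynomial.iterate_derivative_C_mul, Polynomial.iterate_derivative_X_pow_eq_C_mul]
  have h2 : k + a - a = k := by omega
  rw [h2, ← mul_assoc, ← mul_assoc, ← Polynomial.C_mul, ← Polynomial.C_mul]
  congr 2
  have e1 : (ascPochhammer ℝ (m - k)).eval (((a:ℕ):ℝ) + (k : ℝ) + 1)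
      = ((a + k + 1).ascFactorial (m - k) : ℝ) := by
    rw [show (((a:ℕ):ℝ) + (k : ℝ) + 1) = (((a + k + 1 : ℕ)):ℝ) by push_cast; ring,
      ← ascPochhammer_eval_cast, ascPochhammer_nat_eq_ascFactorial]
  have e0 : (ascPochhammer ℝ (m - k)).eval ((0:ℝ) + (k : ℝ) + 1)
      = ((k + 1).ascFactorial (m - k) : ℝ) := by
    rw [show ((0:ℝ) + (k : ℝ) + 1) = (((k + 1 : ℕ)):ℝ) by push_cast; ring,
      ← ascPochhammer_eval_cast, ascPochhammer_nat_eq_ascFactorial]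
  rw [e1, e0]
  have hreal : ((a + k + 1).ascFactorial (m - k) : ℝ) * ((k + a).descFactorial a : ℝ)
      = ((m + 1).ascFactorial a : ℝ) * ((k + 1).ascFactorial (m - k) : ℝ) := by
    exact_mod_cast congrArg (Nat.cast (R := ℝ)) (nat_coeff_identity a m k hk')
  have hd : (((m - k).factorial : ℝ) * (k.factorial : ℝ)) ≠ 0 := by positivity
  field_simp
  linear_combination hreal

/-- one derivative of `exp(-x) * p(x)`. -/
lemma deriv_exp_mul (p : Polynomial ℝ) :
    deriv (fun x => Real.exp (-x) * p.eval x)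
      = fun x => Real.exp (-x) * (Polynomial.derivative p - p).eval x := by
  funext x
  have h1 : HasDerivAt (fun x : ℝ => Real.exp (-x)) (-Real.exp (-x)) x := by
    simpa using (hasDerivAt_neg x).exp
  have h2 : HasDerivAt (fun x : ℝ => p.eval x) (p.derivative.eval x) x := p.hasDerivAt x
  rw [show (fun x => Real.exp (-x) * p.eval x) = ((fun x : ℝ => Real.exp (-x)) * fun x => p.eval x) from rfl,
    (h1.mul h2).deriv]
  rw [Polynomial.eval_sub]
  ring

noncomputable def Sop : Polynomial ℝ → Polynomial ℝ := fun q => Polynomial.derivative q - q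

lemma Sop_C_mul (c : ℝ) (q : Polynomial ℝ) : Sop (Polynomial.C c * q) = Polynomial.C c * Sop q := by
  simp [Sop, Polynomial.derivative_C_mul, mul_sub]

lemma Sop_iter_C_mul (j : ℕ) (c : ℝ) (q : Polynomial ℝ) :
    Sop^[j] (Polynomial.C c * q) = Polynomial.C c * Sop^[j] q := by
  induction j generalizing q with
  | zero => simp
  | succ j ih => rw [Function.iterate_succ_apply, Function.iterate_succ_apply, Sop_C_mul, ih]

lemma Sop_lagP (m : ℕ) (γ : ℝ) : Sop (lagP m γ) = Polynomial.C (-1 : ℝ) * lagP m (γ + 1) := by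
  have h := lagP_sub_derivative m γ
  unfold Sop
  rw [← h]
  simp

lemma Sop_iter_lagP (j m : ℕ) (γ : ℝ) :
    Sop^[j] (lagP m γ) = Polynomial.C ((-1 : ℝ) ^ j) * lagP m (γ + (j : ℕ)) := by
  induction j generalizing γ with
  | zero => simp
  | succ j ih =>
    rw [Function.iterate_succ_apply, Sop_lagP, Sop_iter_C_mul, ih]
    rw [← mul_assoc, ← Polynomial.C_mul]
    have : γ + 1 + ((j : ℕ) : ℝ) = γ + (((j + 1 : ℕ)) : ℝ) := by push_cast; ring
    rw [this]
    congr 1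
    rw [pow_succ]
    congr 1
    ring

lemma iteratedDeriv_exp_mul (j : ℕ) (p : Polynomial ℝ) :
    iteratedDeriv j (fun x => Real.exp (-x) * p.eval x)
      = fun x => Real.exp (-x) * (Sop^[j] p).eval x := by
  induction j generalizing p with
  | zero => simp
  | succ j ih =>
    rw [iteratedDeriv_succ', deriv_exp_mul, ih, Function.iterate_succ_apply]
    rfl

theorem laguerre_type_eigen (α : ℕ) (n : ℕ) (hn : 1 ≤ n) (x : ℝ) :
    lagTypeOp α (Tpoly n α) x
      = -((ascPochhammer ℝ (α + 2)).eval (n : ℝ)) * Tpoly n α x := by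
  obtain ⟨m, rfl⟩ : ∃ m, n = m + 1 := ⟨n - 1, by omega⟩
  have hcast : ((α : ℝ) + 2) = (((α + 2 : ℕ)) : ℝ) := by push_cast; ring
  have hT : ∀ s : ℝ, Tpoly (m + 1) α s
      = -((ascPochhammer ℝ m).eval ((α : ℝ) + 2) / (m + 1).factorial) * s
        * (lagP m ((α : ℝ) + 2)).eval s := by
    intro s
    simp only [Tpoly, Nat.add_sub_cancel, laguerre_eq_lagP]
  set c : ℝ := (ascPochhammer ℝ m).eval ((α : ℝ) + 2) / (m + 1).factorial with hc
  have hinner : (fun s : ℝ => s ^ (α + 1) * Tpoly (m + 1) α s)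
      = fun s => (Polynomial.C (-c) * (Polynomial.X ^ (α + 2) * lagP m (((α + 2 : ℕ)) : ℝ))).eval s := by
    funext s
    rw [hT s, ← hcast]
    simp only [Polynomial.eval_mul, Polynomial.eval_C, Polynomial.eval_pow, Polynomial.eval_X]
    ring
  have h1 : iteratedDeriv (α + 2) (fun s : ℝ => s ^ (α + 1) * Tpoly (m + 1) α s)
      = fun t => (Polynomial.C (-c * ((m + 1).ascFactorial (α + 2) : ℝ)) * lagP m 0).eval t := by
    rw [hinner, iteratedDeriv_polyeval]
    funext t
    congr 1
    rw [Polynomial.iterate_derivative_C_mul, iterate_derivative_Xpow_mul_lagP (α + 2) m,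
      ← mul_assoc, ← Polynomial.C_mul]
  have h2 : (fun t => Real.exp (-t) * iteratedDeriv (α + 2) (fun s : ℝ => s ^ (α + 1) * Tpoly (m + 1) α s) t)
      = fun t => Real.exp (-t) * (Polynomial.C (-c * ((m + 1).ascFactorial (α + 2) : ℝ)) * lagP m 0).eval t := by
    funext t; rw [h1]
  have hA : (ascPochhammer ℝ (α + 2)).eval (((m + 1 : ℕ)) : ℝ) = ((m + 1).ascFactorial (α + 2) : ℝ) := by
    rw [← ascPochhammer_eval_cast, ascPochhammer_nat_eq_ascFactorial]
  have hzero : (0 : ℝ) + (((α + 2 : ℕ)) : ℝ) = (α : ℝ) + 2 := by push_cast; ring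
  rw [lagTypeOp, h2, iteratedDeriv_exp_mul, Sop_iter_C_mul, Sop_iter_lagP, hzero, hT x, hA]
  simp only [Polynomial.eval_mul, Polynomial.eval_C]
  have hsign : (-1 : ℝ) ^ (α + 1) * (-1 : ℝ) ^ (α + 2) = -1 := by
    rw [← pow_add, show α + 1 + (α + 2) = 2 * (α + 1) + 1 by ring, pow_succ, pow_mul]
    norm_num
  have hexp : Real.exp x * Real.exp (-x) = 1 := by
    rw [← Real.exp_add]; simp
  set A : ℝ := ((m + 1).ascFactorial (α + 2) : ℝ) with hAdef
  set E : ℝ := (lagP m ((α : ℝ) + 2)).eval x with hEdef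
  linear_combination (Real.exp x * Real.exp (-x) * (-c * A * x * E)) * hsign
    + (-(-c * A * x * E)) * hexp
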